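/- If U and V are unitary matrices that are both strictly accretive, then the spectrum of U*V contains no negative real numbers (indeed no nonpositive real numbers other than excluded by unitarity: every eigenvalue of U*V has the form e^{iθ} with θ ∈ (−π, π)). -/

import Mathlib

open Matrix
open scoped ComplexOrder

private lemma star_dot_conjTranspose_mulVec {n : ℕ} (M : Matrix (Fin n) (Fin n) ℂ)
    (v : Fin n → ℂ) :
    star v ⬝ᵥ Mᴴ.mulVec v = star (star v ⬝ᵥ M.mulVec v) := by
  rw [dotProduct_mulVec, ← star_mulVec, star_dotProduct]

private lemma re_pos_of_accretive {n : ℕ} (M : Matrix (Fin n) (Fin n) ℂ)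
    (hM : Matrix.PosDef ((2⁻¹ : ℂ) • (M + Mᴴ))) (v : Fin n → ℂ) (hv : v ≠ 0) :
    0 < (star v ⬝ᵥ M.mulVec v).re := by
  have h := hM.dotProduct_mulVec_pos hv
  rw [smul_mulVec, dotProduct_smul, add_mulVec, dotProduct_add,
    star_dot_conjTranspose_mulVec] at h
  set p := star v ⬝ᵥ M.mulVec v
  rw [Complex.lt_def] at h
  have : ((2⁻¹ : ℂ) • (p + star p)).re = p.re := by
    simp [Complex.add_re, Complex.smul_re]
    ring
  simpa [this] using h.1

/-- If `U` and `V` are unitary matrices that are both strictly accretive, then the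
spectrum of `Uᴴ V` contains no nonpositive real numbers. -/
theorem spectrum_unitary_accretive_product_avoids_nonpos {n : ℕ}
    (U V : Matrix (Fin n) (Fin n) ℂ)
    (hU : Uᴴ * U = 1) (hV : Vᴴ * V = 1)
    (hUa : Matrix.PosDef ((2⁻¹ : ℂ) • (U + Uᴴ)))
    (hVa : Matrix.PosDef ((2⁻¹ : ℂ) • (V + Vᴴ))) :
    ∀ c : ℝ, c ≤ 0 → (c : ℂ) ∉ spectrum ℂ (Uᴴ * V) := by
  intro c hc hmem
  rw [spectrum.mem_iff] at hmem
  apply hmem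
  rw [← Matrix.mulVec_injective_iff_isUnit]
  intro x y hxy
  -- reduce to kernel triviality
  have hker : ∀ v : Fin n → ℂ, (algebraMap ℂ (Matrix (Fin n) (Fin n) ℂ) ↑c - Uᴴ * V).mulVec v = 0 → v = 0 := by
    intro v hv0
    by_contra hv
    have hAv : (Uᴴ * V).mulVec v = (c : ℂ) • v := by
      have h1 : (algebraMap ℂ (Matrix (Fin n) (Fin n) ℂ) ↑c).mulVec v - (Uᴴ * V).mulVec v = 0 := by
        rw [← sub_mulVec]; exact hv0
      rw [← sub_eq_zero.mp h1, Algebra.algebraMap_eq_smul_one, smul_mulVec, one_mulVec]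
    have hUU : U * Uᴴ = 1 := mul_eq_one_comm.mp hU
    have hVv : V.mulVec v = (c : ℂ) • U.mulVec v := by
      have := congrArg (U.mulVec ·) hAv
      simp only [mulVec_mulVec] at this
      rw [← Matrix.mul_assoc, hUU, Matrix.one_mul] at this
      rw [this, mulVec_smul]
    have hpU := re_pos_of_accretive U hUa v hv
    have hpV := re_pos_of_accretive V hVa v hv
    rw [hVv] at hpV
    have : (star v ⬝ᵥ ((c : ℂ) • U.mulVec v)).re = c * (star v ⬝ᵥ U.mulVec v).re := by
      rw [dotProduct_smul]
      simp [Complex.smul_re]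
    rw [this] at hpV
    nlinarith
  exact sub_eq_zero.mp (hker (x - y) (by rw [mulVec_sub, hxy, sub_self]))
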